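/- Let α ∈ ℝ. For every y ∈ Λ and x ∈ ℝⁿ one has Δ(x+iy) ≠ 0, and the integral J_α(y) = ∫_{ℝⁿ} |Δ(x+iy)|^{−α} dx converges if and only if α > n − 1. Moreover, when α > n − 1 there is a constant C_α, depending only on α and n, such that J_α(y) = C_α Δ(y)^{−α + n/2} for all y ∈ Λ. -/

import Mathlib

open MeasureTheory Complex Set
open scoped ENNReal

noncomputable section

/-- The Lorentz form `Δ(y) = y₁² − y₂² − ⋯ − yₙ²` on `ℝⁿ`
(written as `2 y₀² − ∑ yᵢ²` with 0-based indexing). -/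
def lor {n : ℕ} [NeZero n] (y : Fin n → ℝ) : ℝ := 2 * y 0 ^ 2 - ∑ i, y i ^ 2

/-- The holomorphic extension of the Lorentz form to `ℂⁿ`. -/
def lorC {n : ℕ} [NeZero n] (z : Fin n → ℂ) : ℂ := 2 * z 0 ^ 2 - ∑ i, z i ^ 2

/-- Componentwise imaginary part. -/
def imP {n : ℕ} (z : Fin n → ℂ) : Fin n → ℝ := fun i => (z i).im

/-- The forward light cone `Λ`. -/
def cone (n : ℕ) [NeZero n] : Set (Fin n → ℝ) := {y | 0 < lor y ∧ 0 < y 0}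

/-- The tube domain `T_Λ` over the forward light cone. -/
def tube (n : ℕ) [NeZero n] : Set (Fin n → ℂ) := {z | imP z ∈ cone n}

/-- The weighted measure `dV_ν = Δ(Im z)^{ν − n/2} dz` on `T_Λ`. -/
def dV (n : ℕ) [NeZero n] (ν : ℝ) : Measure (Fin n → ℂ) :=
  ((volume : Measure (Fin n → ℂ)).restrict (tube n)).withDensity
    (fun z => ENNReal.ofReal (lor (imP z) ^ (ν - (n : ℝ) / 2)))

/-- `∫ |F|^p dV_ν` (as an extended nonnegative real). -/
def lpInt (n : ℕ) [NeZero n] (p ν : ℝ) (F : (Fin n → ℂ) → ℂ) : ℝ≥0∞ :=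
  ∫⁻ z, ENNReal.ofReal (‖F z‖ ^ p) ∂(dV n ν)

/-- The `L^p_ν` norm `(∫ |F|^p dV_ν)^{1/p}`. -/
def lpNorm (n : ℕ) [NeZero n] (p ν : ℝ) (F : (Fin n → ℂ) → ℂ) : ℝ≥0∞ :=
  (lpInt n p ν F) ^ (1 / p)

/-- The Bergman space `A^p_ν`: holomorphic on `T_Λ` and in `L^p_ν`. -/
def memA (n : ℕ) [NeZero n] (p ν : ℝ) (F : (Fin n → ℂ) → ℂ) : Prop :=
  DifferentiableOn ℂ F (tube n) ∧ lpInt n p ν F < ⊤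

/-- Partial derivative `∂/∂zᵢ`. -/
def pd {n : ℕ} (i : Fin n) (F : (Fin n → ℂ) → ℂ) : (Fin n → ℂ) → ℂ :=
  fun z => fderiv ℂ F z (Pi.single i 1)

/-- The wave (Box) operator `□ = −(∂₁² − ∂₂² − ⋯ − ∂ₙ²)`, so that
`□ e^{i z·ξ} = Δ(ξ) e^{i z·ξ}`. -/
def BoxOp {n : ℕ} [NeZero n] (F : (Fin n → ℂ) → ℂ) : (Fin n → ℂ) → ℂ :=
  fun z => -(2 * pd 0 (pd 0 F) z - ∑ i, pd i (pd i F) z)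

/-- The (unnormalized) Bergman kernel `B_β(z,w) = Δ((z − w̄)/i)^{−(β+n)}`. -/
def berg (n : ℕ) [NeZero n] (β : ℝ) (z w : Fin n → ℂ) : ℂ :=
  lorC (fun i => (z i - (starRingEnd ℂ) (w i)) / Complex.I) ^ (-(β + (n : ℝ)) : ℂ)

/-- The Hardy inequality holds for `(p, ν)`:
`∫ |F|^p dV_ν ≤ C ∫ |Δ(Im z) □F(z)|^p dV_ν(z)` for all `F ∈ A^p_ν`. -/
def hardy (n : ℕ) [NeZero n] (p ν : ℝ) : Prop :=
  ∃ C > (0 : ℝ), ∀ F, memA n p ν F →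
    lpInt n p ν F ≤ ENNReal.ofReal C *
      lpInt n p ν (fun z => (lor (imP z) : ℂ) * BoxOp F z)

/-- `g` is the orthogonal projection of `f ∈ L²_ν` onto the closed subspace `A²_ν`:
`g ∈ A²_ν` and `f − g ⊥ A²_ν`. -/
def isProj (n : ℕ) [NeZero n] (ν : ℝ) (f g : (Fin n → ℂ) → ℂ) : Prop :=
  memA n 2 ν g ∧ ∀ h, memA n 2 ν h →
    ∫ z, f z * (starRingEnd ℂ) (h z) ∂(dV n ν) =
      ∫ z, g z * (starRingEnd ℂ) (h z) ∂(dV n ν)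

/-- The Bergman projection `P_ν` admits a bounded extension to `L^p_ν`:
`‖P_ν f‖_{L^p_ν} ≤ C ‖f‖_{L^p_ν}` for all `f ∈ L²_ν ∩ L^p_ν`. -/
def projBounded (n : ℕ) [NeZero n] (p ν : ℝ) : Prop :=
  ∃ C > (0 : ℝ), ∀ f g : (Fin n → ℂ) → ℂ,
    AEStronglyMeasurable f (dV n ν) → lpInt n 2 ν f < ⊤ → lpInt n p ν f < ⊤ →
    isProj n ν f g → lpNorm n p ν g ≤ ENNReal.ofReal C * lpNorm n p ν f

/-- A bounded (continuous) linear functional on `A^p_ν`. -/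
def isBddFunc (n : ℕ) [NeZero n] (p ν : ℝ) (γ : ((Fin n → ℂ) → ℂ) → ℂ) : Prop :=
  (∀ F G, memA n p ν F → memA n p ν G → γ (F + G) = γ F + γ G) ∧
  (∀ (c : ℂ) (F), memA n p ν F → γ (fun z => c * F z) = c * γ F) ∧
  ∃ C : ℝ, ∀ F, memA n p ν F → ‖γ F‖ ≤ C * (lpNorm n p ν F).toReal

namespace LorAux


variable {m : ℕ}

/-- the Lorentz bilinear form -/
def B (x y : Fin (m+1) → ℝ) : ℝ := 2 * x 0 * y 0 - ∑ i, x i * y i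

lemma B_self (x : Fin (m+1) → ℝ) : B x x = lor x := by
  simp [B, lor, sq]; ring

lemma B_comm (x y : Fin (m+1) → ℝ) : B x y = B y x := by
  simp only [B]
  have : ∑ i, x i * y i = ∑ i, y i * x i := Finset.sum_congr rfl fun i _ => by ring
  rw [this]; ring

lemma B_add_left (x x' y : Fin (m+1) → ℝ) : B (x + x') y = B x y + B x' y := by
  simp only [B, Pi.add_apply, add_mul, Finset.sum_add_distrib]; ring

lemma B_smul_left (c : ℝ) (x y : Fin (m+1) → ℝ) : B (c • x) y = c * B x y := by
  simp only [B, Pi.smul_apply, smul_eq_mul, mul_sub, Finset.mul_sum]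
  congr 1
  · ring
  · exact Finset.sum_congr rfl fun i _ => by ring

lemma B_sub_left (x x' y : Fin (m+1) → ℝ) : B (x - x') y = B x y - B x' y := by
  have := B_add_left (x - x') x' y
  simp at this; linarith

/-- decomposition of the complexified Lorentz form -/
lemma lorC_decomp (x y : Fin (m+1) → ℝ) :
    lorC (fun i => (x i : ℂ) + (y i : ℂ) * Complex.I) =
      ((lor x - lor y : ℝ) : ℂ) + ((2 * B x y : ℝ) : ℂ) * Complex.I := by
  simp only [lorC, lor, B]
  have h : ∀ a b : ℝ, ((a : ℂ) + (b : ℂ) * Complex.I) ^ 2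
      = ((a^2 - b^2 : ℝ) : ℂ) + ((2 * (a*b) : ℝ) : ℂ) * Complex.I := by
    intro a b
    push_cast
    ring_nf
    rw [Complex.I_sq]
    ring
  rw [Finset.sum_congr rfl fun i _ => h (x i) (y i), h (x 0) (y 0)]
  push_cast
  simp only [Finset.sum_add_distrib, Finset.sum_sub_distrib, Finset.mul_sum, Finset.sum_mul]
  have hs : ∑ i : Fin (m+1), (2:ℂ) * ((x i : ℂ) * (y i : ℂ)) * Complex.I
      = (∑ i : Fin (m+1), (x i : ℂ) * (y i : ℂ)) * (2 * Complex.I) := by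
    rw [Finset.sum_mul]
    exact Finset.sum_congr rfl fun i _ => by ring
  rw [hs]
  ring

lemma normSq_lorC (x y : Fin (m+1) → ℝ) :
    Complex.normSq (lorC (fun i => (x i : ℂ) + (y i : ℂ) * Complex.I)) =
      (lor x - lor y) ^ 2 + (2 * B x y) ^ 2 := by
  rw [lorC_decomp, Complex.normSq_add_mul_I]

/-- reverse Cauchy-Schwarz: if y is in the cone and B x y = 0 then lor x ≤ 0 -/
lemma lor_nonpos_of_B_eq_zero {x y : Fin (m+1) → ℝ} (hy : y ∈ cone (m+1))
    (hB : B x y = 0) : lor x ≤ 0 := by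
  obtain ⟨hy1, hy2⟩ := hy
  -- split off the 0 coordinate
  have hsum : ∀ u : Fin (m+1) → ℝ, ∑ i, u i = u 0 + ∑ i : Fin m, u i.succ := by
    intro u; rw [Fin.sum_univ_succ]
  have hxy : x 0 * y 0 = ∑ i : Fin m, x i.succ * y i.succ := by
    have := hB
    simp only [B] at this
    rw [hsum (fun i => x i * y i)] at this
    linarith
  have hlx : lor x = x 0 ^ 2 - ∑ i : Fin m, x i.succ ^ 2 := by
    simp only [lor]; rw [hsum (fun i => x i ^ 2)]; ring
  have hly : lor y = y 0 ^ 2 - ∑ i : Fin m, y i.succ ^ 2 := by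
    simp only [lor]; rw [hsum (fun i => y i ^ 2)]; ring
  have hy0 : 0 < y 0 ^ 2 := by positivity
  have hCS := Finset.sum_mul_sq_le_sq_mul_sq Finset.univ (fun i : Fin m => x i.succ)
    (fun i : Fin m => y i.succ)
  have h1 : (x 0 * y 0) ^ 2 ≤ (∑ i : Fin m, x i.succ ^ 2) * ∑ i : Fin m, y i.succ ^ 2 := by
    rw [hxy]; exact hCS
  have h2 : ∑ i : Fin m, y i.succ ^ 2 < y 0 ^ 2 := by
    rw [hly] at hy1; linarith
  have h3 : (0:ℝ) ≤ ∑ i : Fin m, x i.succ ^ 2 := Finset.sum_nonneg fun i _ => sq_nonneg _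
  nlinarith [hlx, sq_nonneg (x 0)]

lemma lorC_ne_zero {y : Fin (m+1) → ℝ} (hy : y ∈ cone (m+1)) (x : Fin (m+1) → ℝ) :
    lorC (fun i => (x i : ℂ) + (y i : ℂ) * Complex.I) ≠ 0 := by
  intro h
  have h2 := normSq_lorC x y
  rw [h, Complex.normSq_zero] at h2
  have hB : B x y = 0 := by nlinarith [sq_nonneg (lor x - lor y), sq_nonneg (2 * B x y)]
  have hx : lor x = lor y := by nlinarith [sq_nonneg (2 * B x y)]
  have := lor_nonpos_of_B_eq_zero hy hB
  have := hy.1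
  linarith [hx ▸ this]



lemma B_add_right (x y y' : Fin (m+1) → ℝ) : B x (y + y') = B x y + B x y' := by
  rw [B_comm, B_add_left, B_comm y x, B_comm y' x]

lemma B_smul_right (c : ℝ) (x y : Fin (m+1) → ℝ) : B x (c • y) = c * B x y := by
  rw [B_comm, B_smul_left, B_comm]

/-- Lorentz reflection in the vector `v`. -/
def refl (v : Fin (m+1) → ℝ) : (Fin (m+1) → ℝ) →ₗ[ℝ] (Fin (m+1) → ℝ) where
  toFun x := x - (2 * B x v / B v v) • v
  map_add' x x' := by
    simp only [B_add_left]
    ext i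
    simp only [Pi.add_apply, Pi.sub_apply, Pi.smul_apply, smul_eq_mul]
    ring
  map_smul' c x := by
    simp only [B_smul_left, RingHom.id_apply]
    ext i
    simp only [Pi.smul_apply, Pi.sub_apply, smul_eq_mul]
    ring

lemma refl_apply (v x : Fin (m+1) → ℝ) : refl v x = x - (2 * B x v / B v v) • v := rfl

lemma B_refl_left (v x y : Fin (m+1) → ℝ) (hv : B v v ≠ 0) :
    B (refl v x) y = B x y - 2 * B x v / B v v * B v y := by
  rw [refl_apply, B_sub_left, B_smul_left]

lemma B_refl_refl (v x y : Fin (m+1) → ℝ) (hv : B v v ≠ 0) :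
    B (refl v x) (refl v y) = B x y := by
  rw [B_refl_left _ _ _ hv, B_comm x (refl v y), B_refl_left _ _ _ hv,
    B_comm v (refl v y), B_refl_left _ _ _ hv]
  field_simp
  rw [B_comm y x, B_comm v x]
  ring

lemma refl_involutive (v : Fin (m+1) → ℝ) (hv : B v v ≠ 0) (x : Fin (m+1) → ℝ) :
    refl v (refl v x) = x := by
  rw [refl_apply, refl_apply, B_sub_left, B_smul_left]
  ext i
  simp only [Pi.sub_apply, Pi.smul_apply, smul_eq_mul]
  field_simp
  ring

lemma refl_comp_self (v : Fin (m+1) → ℝ) (hv : B v v ≠ 0) :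
    (refl v) ∘ₗ (refl v) = LinearMap.id := by
  apply LinearMap.ext
  intro x
  exact refl_involutive v hv x

lemma abs_det_refl (v : Fin (m+1) → ℝ) (hv : B v v ≠ 0) :
    |LinearMap.det (refl v)| = 1 := by
  have h : LinearMap.det (refl v) * LinearMap.det (refl v) = 1 := by
    rw [← LinearMap.det_comp, refl_comp_self v hv, LinearMap.det_id]
  have : LinearMap.det (refl v) = 1 ∨ LinearMap.det (refl v) = -1 := by
    rcases mul_self_eq_one_iff.mp h with h' | h'
    · exact Or.inl h'
    · exact Or.inr h'
  rcases this with h' | h' <;> rw [h'] <;> norm_num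

/-- the first basis vector -/
def e0 : Fin (m+1) → ℝ := fun i => if i = 0 then 1 else 0

lemma B_e0_right (x : Fin (m+1) → ℝ) : B x e0 = x 0 := by
  simp only [B, e0]
  rw [Finset.sum_congr rfl (fun i _ => show x i * (if i = 0 then (1:ℝ) else 0)
    = if i = 0 then x i else 0 by split <;> simp)]
  rw [Finset.sum_ite_eq' Finset.univ 0 (fun i => x i)]
  simp
  ring

lemma B_e0_left (x : Fin (m+1) → ℝ) : B e0 x = x 0 := by rw [B_comm, B_e0_right]

lemma e0_zero : (e0 : Fin (m+1) → ℝ) 0 = 1 := by simp [e0]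

lemma lor_e0 : lor (e0 : Fin (m+1) → ℝ) = 1 := by
  rw [← B_self, B_e0_right, e0_zero]

lemma e0_mem_cone : (e0 : Fin (m+1) → ℝ) ∈ cone (m+1) := by
  constructor
  · rw [lor_e0]; norm_num
  · rw [e0_zero]; norm_num

/-- The linear map taking `e0` to a unit cone vector, preserving `B`. -/
def lmap (y : Fin (m+1) → ℝ) : (Fin (m+1) → ℝ) →ₗ[ℝ] (Fin (m+1) → ℝ) :=
  (refl y) ∘ₗ (refl (e0 + y))

lemma lmap_spec {y : Fin (m+1) → ℝ} (hy : y ∈ cone (m+1)) (h1 : lor y = 1) :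
    lmap y e0 = y ∧ (∀ x x', B (lmap y x) (lmap y x') = B x x') ∧
      |LinearMap.det (lmap y)| = 1 := by
  have hyy : B y y = 1 := by rw [B_self]; exact h1
  have hyy' : B y y ≠ 0 := by rw [hyy]; norm_num
  have hv : B (e0 + y) (e0 + y) = 2 + 2 * y 0 := by
    simp only [B_add_left, B_add_right, B_e0_left, B_e0_right, hyy, e0_zero, Pi.add_apply]
    try ring
  have hy0 : 0 < y 0 := hy.2
  have hv' : B (e0 + y) (e0 + y) ≠ 0 := by rw [hv]; linarith
  refine ⟨?_, fun x x' => ?_, ?_⟩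
  · show refl y (refl (e0 + y) e0) = y
    have h2 : B e0 (e0 + y) = 1 + y 0 := by
      simp only [B_add_right, B_e0_left, B_e0_right, e0_zero, Pi.add_apply]
      try ring
    have h3 : refl (e0 + y) e0 = -y := by
      rw [refl_apply, h2, hv]
      have : 2 * (1 + y 0) / (2 + 2 * y 0) = 1 := by
        field_simp
      rw [this, one_smul]
      ext i; simp
    rw [h3, map_neg, refl_apply, hyy]
    norm_num
    ext i
    simp only [Pi.neg_apply, Pi.sub_apply, Pi.smul_apply, smul_eq_mul]
    ring
  · show B (refl y (refl (e0+y) x)) (refl y (refl (e0+y) x')) = B x x'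
    rw [B_refl_refl _ _ _ hyy', B_refl_refl _ _ _ hv']
  · show |LinearMap.det ((refl y) ∘ₗ (refl (e0+y)))| = 1
    rw [LinearMap.det_comp, abs_mul, abs_det_refl _ hyy', abs_det_refl _ hv']
    norm_num



lemma lor_smul (c : ℝ) (y : Fin (m+1) → ℝ) : lor (c • y) = c^2 * lor y := by
  rw [← B_self, B_smul_left, B_smul_right, B_self]; ring

/-- the integrand for parameter `y` -/
def itg (α : ℝ) (y : Fin (m+1) → ℝ) (x : Fin (m+1) → ℝ) : ℝ :=
  ‖lorC (fun i => (x i : ℂ) + (y i : ℂ) * Complex.I)‖ ^ (-α)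

lemma itg_nonneg (α : ℝ) (y x : Fin (m+1) → ℝ) : 0 ≤ itg α y x :=
  Real.rpow_nonneg (norm_nonneg _) _

lemma itg_cont {y : Fin (m+1) → ℝ} (hy : y ∈ cone (m+1)) (α : ℝ) :
    Continuous (itg α y) := by
  have hc : Continuous fun (x : Fin (m+1) → ℝ) =>
      lorC (fun i => (x i : ℂ) + (y i : ℂ) * Complex.I) := by
    unfold lorC
    apply Continuous.sub
    · exact (continuous_const.mul (((Complex.continuous_ofReal.comp
        (continuous_apply 0)).add continuous_const).pow 2))
    · exact continuous_finset_sum _ fun i _ => ((Complex.continuous_ofReal.comp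
        (continuous_apply i)).add continuous_const).pow 2
  exact (hc.norm).rpow_const fun x =>
    Or.inl (norm_ne_zero_iff.mpr (lorC_ne_zero hy x))

/-- the main integral as a lower integral -/
def Lint (α : ℝ) (y : Fin (m+1) → ℝ) : ℝ≥0∞ :=
  ∫⁻ x, ENNReal.ofReal (itg α y x)

lemma Lint_eq {y : Fin (m+1) → ℝ} (hy : y ∈ cone (m+1)) (α : ℝ) :
    Lint α y = ENNReal.ofReal ((lor y) ^ (((m:ℝ)+1)/2 - α)) * Lint α (e0 (m := m)) := by
  obtain ⟨hy1, hy2⟩ := hy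
  set d : ℝ := Real.sqrt (lor y) with hd_def
  have hd : 0 < d := Real.sqrt_pos.mpr hy1
  have hd2 : d ^ 2 = lor y := Real.sq_sqrt hy1.le
  set y' : Fin (m+1) → ℝ := d⁻¹ • y with hy'_def
  have hy'lor : lor y' = 1 := by
    rw [hy'_def, lor_smul, ← hd2]
    field_simp
  have hy'cone : y' ∈ cone (m+1) := by
    constructor
    · rw [hy'lor]; norm_num
    · show 0 < d⁻¹ * y 0
      positivity
  obtain ⟨hS1, hS2, hS3⟩ := lmap_spec hy'cone hy'lor
  set S := lmap y' with hS_def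
  set T : (Fin (m+1) → ℝ) →ₗ[ℝ] (Fin (m+1) → ℝ) := d • S with hT_def
  have hTy : T e0 = y := by
    rw [hT_def]
    show d • (S e0) = y
    rw [hS1, hy'_def, smul_smul]
    rw [mul_inv_cancel₀ hd.ne']
    exact one_smul _ _
  have hTB : ∀ u u', B (T u) (T u') = d^2 * B u u' := by
    intro u u'
    show B (d • S u) (d • S u') = _
    rw [B_smul_left, B_smul_right, hS2]
    ring
  have hdet : |LinearMap.det T| = d ^ (m+1) := by
    rw [hT_def, LinearMap.det_smul, abs_mul, _root_.abs_pow, abs_of_pos hd, hS3, mul_one]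
    congr 1
    rw [Module.finrank_pi, Fintype.card_fin]
  have hdet0 : LinearMap.det T ≠ 0 := by
    intro h
    rw [h, abs_zero] at hdet
    exact (pow_pos hd (m+1)).ne hdet
  -- pointwise identity
  have hpt : ∀ u, itg α y (T u) = (lor y) ^ (-α) * itg α e0 u := by
    intro u
    have key : lorC (fun i => ((T u) i : ℂ) + (y i : ℂ) * Complex.I) =
        ((lor y : ℝ) : ℂ) * lorC (fun i => (u i : ℂ) + (e0 i : ℂ) * Complex.I) := by
      rw [lorC_decomp, lorC_decomp]
      have h1 : lor (T u) = lor y * lor u := by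
        rw [← B_self, hTB, B_self, hd2]
      have h2 : B (T u) y = lor y * B u e0 := by
        conv_lhs => rw [← hTy]
        rw [hTB, hd2]
      rw [h1, h2, lor_e0]
      push_cast
      ring
    unfold itg
    rw [key, norm_mul, Complex.norm_real, Real.norm_eq_abs, abs_of_pos hy1,
      Real.mul_rpow hy1.le (norm_nonneg _)]
  -- change of variables
  have hmap := Real.map_linearMap_volume_pi_eq_smul_volume_pi hdet0
  have hmeas : Measurable fun x => ENNReal.ofReal (itg α y x) :=
    (ENNReal.measurable_ofReal.comp (itg_cont ⟨hy1, hy2⟩ α).measurable)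
  have hTmeas : Measurable (⇑T) := T.continuous_of_finiteDimensional.measurable
  have key2 : ∫⁻ x, ENNReal.ofReal (itg α y x) ∂(Measure.map (⇑T) volume) =
      ∫⁻ u, ENNReal.ofReal (itg α y (T u)) := lintegral_map hmeas hTmeas
  rw [hmap, lintegral_smul_measure, smul_eq_mul] at key2
  have hrc : ∫⁻ u, ENNReal.ofReal (itg α y (T u)) =
      ENNReal.ofReal ((lor y) ^ (-α)) * Lint α (e0 (m := m)) := by
    unfold Lint
    rw [← lintegral_const_mul' _ _ ENNReal.ofReal_ne_top]
    congr 1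
    ext u
    rw [hpt u, ENNReal.ofReal_mul (Real.rpow_nonneg hy1.le _)]
  rw [hrc] at key2
  -- key2 : ofReal |det T⁻¹| * Lint α y = ofReal (lor y ^ (-α)) * Lint α (e0 (m := m))
  have habs : |(LinearMap.det T)⁻¹| = (d ^ (m+1))⁻¹ := by
    rw [abs_inv, hdet]
  rw [habs] at key2
  have hpow : (0:ℝ) < d ^ (m+1) := pow_pos hd _
  have hinv : ENNReal.ofReal ((d ^ (m+1))⁻¹) = (ENNReal.ofReal (d ^ (m+1)))⁻¹ :=
    ENNReal.ofReal_inv_of_pos hpow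
  rw [hinv] at key2
  have hne : ENNReal.ofReal (d ^ (m+1)) ≠ 0 := by
    simp [ENNReal.ofReal_eq_zero]; linarith
  have hne' : ENNReal.ofReal (d ^ (m+1)) ≠ ⊤ := ENNReal.ofReal_ne_top
  have : Lint α y = ENNReal.ofReal (d ^ (m+1)) *
      (ENNReal.ofReal ((lor y) ^ (-α)) * Lint α (e0 (m := m))) := by
    rw [← key2, ← mul_assoc, ENNReal.mul_inv_cancel hne hne', one_mul]
    rfl
  rw [this, ← mul_assoc, ← ENNReal.ofReal_mul hpow.le]
  congr 2
  -- d ^ (m+1) * lor y ^ (-α) = lor y ^ ((m+1)/2 - α)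
  have hd' : d ^ (m+1) = (lor y) ^ ((1/2 : ℝ) * ((m:ℝ)+1)) := by
    rw [hd_def, Real.sqrt_eq_rpow, ← Real.rpow_natCast ((lor y) ^ ((1:ℝ)/2)) (m+1),
      ← Real.rpow_mul hy1.le]
    push_cast
    ring_nf
  rw [hd', ← Real.rpow_add hy1]
  congr 1
  ring


/-- the Euclidean factor -/
abbrev E (m : ℕ) := EuclideanSpace ℝ (Fin m)

/-- the product decomposition map -/
def Phi (m : ℕ) : ℝ × E m → (Fin (m+1) → ℝ) :=
  (MeasurableEquiv.piFinSuccAbove (fun _ : Fin (m+1) => ℝ) 0).symm ∘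
    Prod.map id ((MeasurableEquiv.toLp 2 (Fin m → ℝ)).symm)

lemma Phi_mp : MeasurePreserving (Phi m) := by
  have h1 : MeasurePreserving
      (Prod.map (id : ℝ → ℝ) ((MeasurableEquiv.toLp 2 (Fin m → ℝ)).symm))
      volume volume := by
    rw [Measure.volume_eq_prod, Measure.volume_eq_prod]
    exact (MeasurePreserving.id _).prod
      (EuclideanSpace.volume_preserving_symm_measurableEquiv_toLp (Fin m))
  exact ((volume_preserving_piFinSuccAbove (fun _ : Fin (m+1) => ℝ) 0).symm).comp h1

lemma Phi_apply (p : ℝ × E m) :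
    Phi m p = Fin.insertNth 0 p.1 (fun i => p.2 i) := by
  show (MeasurableEquiv.piFinSuccAbove (fun _ : Fin (m+1) => ℝ) 0).symm _ = _
  rw [MeasurableEquiv.piFinSuccAbove_symm_apply]
  rfl

lemma Phi_eq (p : ℝ × E m) : Phi m p = Fin.cons p.1 (fun i => p.2 i) := by
  rw [Phi_apply]
  ext j
  refine Fin.cases ?_ ?_ j
  · simp
  · intro i
    rw [Fin.cons_succ, ← Fin.succAbove_zero, Fin.insertNth_apply_succAbove]

lemma Phi_zero (p : ℝ × E m) : Phi m p 0 = p.1 := by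
  rw [Phi_eq]; rfl

lemma Phi_sum_sq (p : ℝ × E m) : ∑ i, (Phi m p i) ^ 2 = p.1 ^ 2 + ‖p.2‖ ^ 2 := by
  rw [Phi_eq, Fin.sum_univ_succ]
  simp only [Fin.cons_zero, Fin.cons_succ]
  congr 1
  have hnorm : ‖p.2‖ ^ 2 = ∑ i, (p.2 i) ^ 2 := by
    rw [EuclideanSpace.norm_eq, Real.sq_sqrt (by positivity)]
    exact Finset.sum_congr rfl fun i _ => by rw [Real.norm_eq_abs, _root_.sq_abs]
  rw [hnorm]

/-- the 1-d profile function -/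
def g (α c t : ℝ) : ℝ := ((t^2 - c)^2 + 4*t^2) ^ ((1/2 : ℝ) * (-α))

lemma itg_Phi (α : ℝ) (p : ℝ × E m) :
    itg α (e0 (m := m)) (Phi m p) = g α (1 + ‖p.2‖^2) p.1 := by
  unfold itg g
  rw [lorC_decomp, lor_e0, B_e0_right, Phi_zero]
  have hlor : lor (Phi m p) = p.1^2 - ‖p.2‖^2 := by
    unfold lor
    rw [Phi_sum_sq, Phi_zero]; ring
  rw [hlor]
  have hn : ‖((p.1^2 - ‖p.2‖^2 - 1 : ℝ) : ℂ) + ((2 * p.1 : ℝ) : ℂ) * Complex.I‖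
      = Real.sqrt ((p.1^2 - (1 + ‖p.2‖^2))^2 + 4*p.1^2) := by
    rw [Complex.norm_def, Complex.normSq_add_mul_I]
    congr 1
    ring
  rw [hn, Real.sqrt_eq_rpow, ← Real.rpow_mul (by positivity)]

lemma key_ineq {s u : ℝ} (hs1 : 1 ≤ s) (hu0 : 0 ≤ u) :
    (1/3 * s * (1 + |u - s|))^2 ≤ (u^2 - s^2)^2 + 4*u^2 := by
  set e := |u - s| with he_def
  have he0 : 0 ≤ e := abs_nonneg _
  have he2 : e^2 = (u-s)^2 := sq_abs _
  clear_value e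
  rcases le_or_gt u (s/2) with h1 | h1
  · have hus : u - s ≤ 0 := by linarith
    have he : e = s - u := by rw [he_def, _root_.abs_of_nonpos hus]; ring
    have h6 : (1+e)^2 ≤ 4*s^2 := by nlinarith
    have h4b : 3/4*s^2 ≤ s^2 - u^2 := by nlinarith
    have h5 : (3/4*s^2)^2 ≤ (s^2 - u^2)^2 := pow_le_pow_left₀ (by positivity) h4b 2
    have h7 : s^2*(1+e)^2 ≤ s^2*(4*s^2) := mul_le_mul_of_nonneg_left h6 (sq_nonneg s)
    nlinarith [sq_nonneg u, sq_nonneg s, show (s^2-u^2)^2 = (u^2-s^2)^2 from by ring]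
  · rcases le_or_gt (2*s) u with h2 | h2
    · have hus : 0 ≤ u - s := by linarith
      have he : e = u - s := by rw [he_def, _root_.abs_of_nonneg hus]
      have h6' : 1 + e ≤ u := by rw [he]; linarith
      have h6 : (1+e)^2 ≤ u^2 := pow_le_pow_left₀ (by linarith) h6' 2
      have h4 : s^2 ≤ u^2/4 := by nlinarith
      have h4b : 3/4*u^2 ≤ u^2 - s^2 := by nlinarith
      have h5 : (3/4*u^2)^2 ≤ (u^2 - s^2)^2 := pow_le_pow_left₀ (by positivity) h4b 2
      have h7 : s^2*(1+e)^2 ≤ (u^2/4)*(u^2) :=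
        mul_le_mul h4 h6 (sq_nonneg _) (by positivity)
      nlinarith [sq_nonneg u]
    · have h6 : (1+e)^2 ≤ 2 + 2*e^2 := by nlinarith [sq_nonneg (1-e)]
      have ha : s^2 ≤ (u+s)^2 := by nlinarith
      have hb : (u^2 - s^2)^2 = (u+s)^2 * (u-s)^2 := by ring
      have h7 : s^2 * e^2 ≤ (u^2-s^2)^2 := by
        rw [hb, he2]; exact mul_le_mul_of_nonneg_right ha (sq_nonneg _)
      have h8 : s^2 ≤ 4*u^2 := by nlinarith
      have h9 : s^2*(1+e)^2 ≤ s^2*(2+2*e^2) := mul_le_mul_of_nonneg_left h6 (sq_nonneg s)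
      nlinarith [sq_nonneg (s*e)]

/-- 1-d lower bound for the modulus -/
lemma oneD_lb {c : ℝ} (hc : 1 ≤ c) (t : ℝ) :
    (1/3) * Real.sqrt c * (1 + |(|t| - Real.sqrt c)|) ≤
      Real.sqrt ((t^2 - c)^2 + 4*t^2) := by
  have hs1 : 1 ≤ Real.sqrt c := by
    rw [show (1:ℝ) = Real.sqrt 1 by simp]
    exact Real.sqrt_le_sqrt hc
  have hs2 : Real.sqrt c ^ 2 = c := Real.sq_sqrt (by linarith)
  have hlhs : 0 ≤ (1/3) * Real.sqrt c * (1 + |(|t| - Real.sqrt c)|) := by positivity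
  refine (Real.le_sqrt hlhs (by positivity)).mpr ?_
  have := key_ineq (u := |t|) hs1 (abs_nonneg t)
  rw [_root_.sq_abs, hs2] at this
  exact this



lemma D_pos {c t : ℝ} (hc : 1 ≤ c) : 0 < (t^2 - c)^2 + 4*t^2 := by
  rcases eq_or_ne t 0 with h | h
  · subst h
    have : (0:ℝ) < c^2 := by positivity
    nlinarith
  · have : (0:ℝ) < 4*t^2 := by positivity
    nlinarith [sq_nonneg (t^2 - c)]

lemma g_eq_sqrt (α : ℝ) {c : ℝ} (hc : 1 ≤ c) (t : ℝ) :
    g α c t = (Real.sqrt ((t^2 - c)^2 + 4*t^2)) ^ (-α) := by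
  unfold g
  rw [Real.sqrt_eq_rpow, ← Real.rpow_mul (D_pos hc (t := t)).le]

/-- the basic 1-d integral -/
def kappa (α : ℝ) : ℝ≥0∞ := ∫⁻ t : ℝ, ENNReal.ofReal ((1 + |t|) ^ (-α))

lemma kappa_lt_top {α : ℝ} (hα : 1 < α) : kappa α < ⊤ := by
  have h2 : ((Module.finrank ℝ ℝ : ℕ) : ℝ) < α := by
    simp only [Module.finrank_self, Nat.cast_one]
    exact hα
  exact finite_integral_one_add_norm h2

lemma meas_shift (α s : ℝ) :
    Measurable fun t : ℝ => ENNReal.ofReal ((1 + |t - s|) ^ (-α)) := by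
  have hcont : Continuous fun t : ℝ => (1 + |t - s|) ^ (-α) :=
    (continuous_const.add (continuous_id.sub continuous_const).abs).rpow_const
      (fun t => Or.inl (by simp only [Pi.add_apply]; positivity))
  exact ENNReal.measurable_ofReal.comp hcont.measurable

lemma lineInt {α : ℝ} (s : ℝ) :
    (∫⁻ t : ℝ, ENNReal.ofReal ((1 + |(|t| - s)|) ^ (-α))) ≤ kappa α + kappa α := by
  have hpt : ∀ t : ℝ, ENNReal.ofReal ((1 + |(|t| - s)|) ^ (-α)) ≤
      ENNReal.ofReal ((1 + |t - s|) ^ (-α)) + ENNReal.ofReal ((1 + |t + s|) ^ (-α)) := by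
    intro t
    rcases le_or_gt 0 t with h | h
    · rw [_root_.abs_of_nonneg h]
      exact le_add_right le_rfl
    · have : |t| = -t := abs_of_neg h
      rw [this, show |-t - s| = |t + s| by rw [← abs_neg]; ring_nf]
      exact le_add_left le_rfl
  calc (∫⁻ t : ℝ, ENNReal.ofReal ((1 + |(|t| - s)|) ^ (-α)))
      ≤ ∫⁻ t : ℝ, (ENNReal.ofReal ((1 + |t - s|) ^ (-α))
        + ENNReal.ofReal ((1 + |t + s|) ^ (-α))) := lintegral_mono hpt
    _ = (∫⁻ t : ℝ, ENNReal.ofReal ((1 + |t - s|) ^ (-α)))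
        + ∫⁻ t : ℝ, ENNReal.ofReal ((1 + |t + s|) ^ (-α)) :=
      lintegral_add_left (meas_shift α s) _
    _ = kappa α + kappa α := by
      congr 1
      · have h := lintegral_add_right_eq_self (μ := volume)
          (fun t : ℝ => ENNReal.ofReal ((1 + |t|) ^ (-α))) (-s)
        unfold kappa
        rw [← h]
        exact lintegral_congr fun t => by rw [sub_eq_add_neg]
      · have h := lintegral_add_right_eq_self (μ := volume)
          (fun t : ℝ => ENNReal.ofReal ((1 + |t|) ^ (-α))) s
        unfold kappa
        rw [← h]

lemma g_meas (α : ℝ) :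
    Measurable fun p : ℝ × E m => ENNReal.ofReal (g α (1 + ‖p.2‖^2) p.1) := by
  apply ENNReal.measurable_ofReal.comp
  unfold g
  have hD : Continuous fun p : ℝ × E m =>
      ((p.1^2 - (1 + ‖p.2‖^2))^2 + 4*p.1^2) := by fun_prop
  exact (hD.rpow_const fun p => Or.inl (D_pos (t := p.1)
    (by linarith [sq_nonneg ‖p.2‖] : (1:ℝ) ≤ 1 + ‖p.2‖^2)).ne').measurable

theorem Lint_e0_lt_top {α : ℝ} (hm2 : 2 ≤ m) (hα : (m:ℝ) < α) :
    Lint α (e0 (m := m)) < ⊤ := by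
  have hm2' : (2:ℝ) ≤ (m:ℝ) := by exact_mod_cast hm2
  have hα1 : 1 < α := by linarith
  have hα0 : 0 < α := by linarith
  have hmeas : Measurable fun x => ENNReal.ofReal (itg α (e0 (m := m)) x) :=
    ENNReal.measurable_ofReal.comp (itg_cont e0_mem_cone α).measurable
  have htrans : Lint α (e0 (m := m)) =
      ∫⁻ p : ℝ × E m, ENNReal.ofReal (g α (1 + ‖p.2‖^2) p.1) := by
    unfold Lint
    rw [← Phi_mp.lintegral_comp hmeas]
    congr 1; ext p; rw [itg_Phi]
  rw [htrans, Measure.volume_eq_prod, lintegral_prod_symm _ (g_meas α).aemeasurable]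
  -- inner estimate
  set C1 : ℝ := 3 ^ α * (Real.sqrt 2) ^ α with hC1
  have hC1pos : 0 < C1 := by positivity
  have hin : ∀ v : E m, (∫⁻ t : ℝ, ENNReal.ofReal (g α (1 + ‖v‖^2) t)) ≤
      ENNReal.ofReal (C1 * (1 + ‖v‖) ^ (-α)) * (kappa α + kappa α) := by
    intro v
    set c : ℝ := 1 + ‖v‖^2 with hc_def
    have hc : 1 ≤ c := by rw [hc_def]; linarith [sq_nonneg ‖v‖]
    set s : ℝ := Real.sqrt c with hs_def
    have hs1 : 1 ≤ s := by
      rw [hs_def, show (1:ℝ) = Real.sqrt 1 by simp]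
      exact Real.sqrt_le_sqrt hc
    -- pointwise bound
    have hptw : ∀ t : ℝ, g α c t ≤
        (3 ^ α * s ^ (-α)) * (1 + |(|t| - s)|) ^ (-α) := by
      intro t
      rw [g_eq_sqrt α hc]
      have hlb := oneD_lb hc t
      have hpos : 0 < (1/3) * s * (1 + |(|t| - s)|) := by positivity
      have h1 : (Real.sqrt ((t^2 - c)^2 + 4*t^2)) ^ (-α) ≤
          ((1/3) * s * (1 + |(|t| - s)|)) ^ (-α) :=
        Real.rpow_le_rpow_of_nonpos hpos hlb (by linarith)
      have h2 : ((1/3) * s * (1 + |(|t| - s)|)) ^ (-α) =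
          (3 ^ α * s ^ (-α)) * (1 + |(|t| - s)|) ^ (-α) := by
        rw [Real.mul_rpow (by positivity) (by positivity),
          Real.mul_rpow (by positivity) (by positivity)]
        congr 1
        congr 1
        rw [show (1/3 : ℝ) = 3⁻¹ by norm_num, Real.inv_rpow (by norm_num),
          ← Real.rpow_neg (by norm_num), neg_neg]
      rw [h2] at h1
      exact h1
    have hs_bd : s ^ (-α) ≤ (Real.sqrt 2) ^ α * (1 + ‖v‖) ^ (-α) := by
      have hv1 : (0:ℝ) < 1 + ‖v‖ := by positivity
      have hkey : (1 + ‖v‖) / Real.sqrt 2 ≤ s := by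
        rw [hs_def]
        have h2 : ((1 + ‖v‖) / Real.sqrt 2)^2 ≤ c := by
          rw [div_pow, Real.sq_sqrt (by norm_num : (0:ℝ) ≤ 2)]
          rw [hc_def]
          nlinarith [sq_nonneg (1 - ‖v‖), norm_nonneg v]
        exact (Real.le_sqrt (by positivity) (by positivity)).mpr h2
      have h1 : s ^ (-α) ≤ ((1 + ‖v‖) / Real.sqrt 2) ^ (-α) :=
        Real.rpow_le_rpow_of_nonpos (by positivity) hkey (by linarith)
      have h2 : ((1 + ‖v‖) / Real.sqrt 2) ^ (-α) =
          (Real.sqrt 2) ^ α * (1 + ‖v‖) ^ (-α) := by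
        rw [Real.div_rpow (by positivity) (Real.sqrt_nonneg 2),
          div_eq_mul_inv, ← Real.rpow_neg (Real.sqrt_nonneg 2), neg_neg, mul_comm]
      rw [h2] at h1
      exact h1
    calc (∫⁻ t : ℝ, ENNReal.ofReal (g α c t))
        ≤ ∫⁻ t : ℝ, ENNReal.ofReal (3 ^ α * s ^ (-α)) *
          ENNReal.ofReal ((1 + |(|t| - s)|) ^ (-α)) := by
          apply lintegral_mono
          intro t
          dsimp only
          rw [← ENNReal.ofReal_mul (by positivity)]
          exact ENNReal.ofReal_le_ofReal (hptw t)
      _ = ENNReal.ofReal (3 ^ α * s ^ (-α)) *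
          ∫⁻ t : ℝ, ENNReal.ofReal ((1 + |(|t| - s)|) ^ (-α)) :=
          lintegral_const_mul' _ _ ENNReal.ofReal_ne_top
      _ ≤ ENNReal.ofReal (3 ^ α * s ^ (-α)) * (kappa α + kappa α) := by
          exact mul_le_mul_right (lineInt s) _
      _ ≤ ENNReal.ofReal (C1 * (1 + ‖v‖) ^ (-α)) * (kappa α + kappa α) := by
          apply mul_le_mul_left
          apply ENNReal.ofReal_le_ofReal
          rw [hC1]
          calc 3 ^ α * s ^ (-α) ≤ 3 ^ α * ((Real.sqrt 2) ^ α * (1 + ‖v‖) ^ (-α)) := by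
                apply mul_le_mul_of_nonneg_left hs_bd (by positivity)
            _ = 3 ^ α * (Real.sqrt 2) ^ α * ((1 + ‖v‖) ^ (-α)) := by ring
  have hJ : (∫⁻ v : E m, ENNReal.ofReal ((1 + ‖v‖) ^ (-α))) < ⊤ := by
    apply finite_integral_one_add_norm
    rw [finrank_euclideanSpace_fin]
    exact hα
  have hκ : kappa α + kappa α < ⊤ :=
    ENNReal.add_lt_top.mpr ⟨kappa_lt_top hα1, kappa_lt_top hα1⟩
  calc (∫⁻ v : E m, ∫⁻ t : ℝ, ENNReal.ofReal (g α (1 + ‖v‖^2) t))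
      ≤ ∫⁻ v : E m, ENNReal.ofReal (C1 * (1 + ‖v‖) ^ (-α)) * (kappa α + kappa α) :=
        lintegral_mono hin
    _ = (∫⁻ v : E m, ENNReal.ofReal (C1 * (1 + ‖v‖) ^ (-α))) * (kappa α + kappa α) :=
        lintegral_mul_const' _ _ hκ.ne
    _ = (ENNReal.ofReal C1 * ∫⁻ v : E m, ENNReal.ofReal ((1 + ‖v‖) ^ (-α))) *
        (kappa α + kappa α) := by
        congr 1
        rw [← lintegral_const_mul' _ _ ENNReal.ofReal_ne_top]
        congr 1; ext v
        rw [← ENNReal.ofReal_mul hC1pos.le]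
    _ < ⊤ := by
        apply ENNReal.mul_lt_top _ hκ
        exact ENNReal.mul_lt_top ENNReal.ofReal_lt_top hJ



lemma rpow_sandwich {α a K : ℝ} (hK : 1 ≤ K) (h1 : K ≤ a) (h2 : a ≤ 7*K) :
    7 ^ (-|α|) * K ^ (-α) ≤ a ^ (-α) := by
  have hK0 : (0:ℝ) < K := by linarith
  have ha0 : (0:ℝ) < a := by linarith
  rcases le_or_gt 0 α with hα | hα
  · rw [_root_.abs_of_nonneg hα]
    have := Real.rpow_le_rpow_of_nonpos ha0 h2 (neg_nonpos.mpr hα)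
    rwa [Real.mul_rpow (by norm_num) hK0.le] at this
  · rw [_root_.abs_of_neg hα, neg_neg]
    have hbase : K ^ (-α) ≤ a ^ (-α) :=
      Real.rpow_le_rpow hK0.le h1 (by linarith)
    have h7 : (7:ℝ) ^ α ≤ 1 :=
      Real.rpow_le_one_of_one_le_of_nonpos (by norm_num) hα.le
    calc 7 ^ α * K ^ (-α) ≤ 1 * K ^ (-α) :=
          mul_le_mul_of_nonneg_right h7 (Real.rpow_nonneg hK0.le _)
      _ = K ^ (-α) := one_mul _
      _ ≤ a ^ (-α) := hbase

lemma g_box_lb {α K t r : ℝ} (hK : 1 ≤ K) (ht1 : K ≤ t) (ht2 : t ≤ K + 1)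
    (hr1 : K ≤ r) (hr2 : r ≤ K + 1) :
    7 ^ (-|α|) * K ^ (-α) ≤ g α (1 + r^2) t := by
  have hc : (1:ℝ) ≤ 1 + r^2 := by nlinarith
  rw [g_eq_sqrt α hc]
  set D : ℝ := (t^2 - (1+r^2))^2 + 4*t^2 with hD_def
  have hDub : D ≤ (7*K)^2 := by
    have h1 : |t^2 - r^2| ≤ 4*K := by
      rw [abs_le]
      constructor <;> nlinarith
    have h2 : (t^2 - (1+r^2))^2 ≤ (4*K+1)^2 := by
      rw [abs_le] at h1
      exact sq_le_sq' (by linarith [h1.1, h1.2]) (by linarith [h1.1, h1.2])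
    nlinarith [h2]
  have hDlb : K^2 ≤ D := by nlinarith
  apply rpow_sandwich hK
  · rw [show K = Real.sqrt (K^2) by rw [Real.sqrt_sq (by linarith)]]
    exact Real.sqrt_le_sqrt hDlb
  · rw [show 7*K = Real.sqrt ((7*K)^2) by rw [Real.sqrt_sq (by linarith)]]
    exact Real.sqrt_le_sqrt hDub

lemma tsum_inv_top : (∑' k : ℕ, ENNReal.ofReal (((k:ℝ)+1)⁻¹)) = ⊤ := by
  by_contra h
  have hs := ENNReal.summable_toReal h
  have hs2 : Summable fun k : ℕ => ((k:ℝ)+1)⁻¹ := by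
    convert hs using 2 with k
    rw [ENNReal.toReal_ofReal (by positivity)]
  have hs3 : Summable fun k : ℕ => ((k:ℝ))⁻¹ := by
    refine (summable_nat_add_iff 1).mp ?_
    simpa using hs2
  apply Real.not_summable_one_div_natCast
  simpa [one_div] using hs3

theorem Lint_e0_top {α : ℝ} (hm2 : 2 ≤ m) (hα : α ≤ (m:ℝ)) :
    Lint α (e0 (m := m)) = ⊤ := by
  haveI : Nonempty (Fin m) := ⟨⟨0, by omega⟩⟩
  obtain ⟨m', hm'⟩ : ∃ m', m = m' + 1 := ⟨m - 1, by omega⟩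
  have hmeas : Measurable fun x => ENNReal.ofReal (itg α (e0 (m := m)) x) :=
    ENNReal.measurable_ofReal.comp (itg_cont e0_mem_cone α).measurable
  have htrans : Lint α (e0 (m := m)) =
      ∫⁻ p : ℝ × E m, ENNReal.ofReal (g α (1 + ‖p.2‖^2) p.1) := by
    unfold Lint
    rw [← Phi_mp.lintegral_comp hmeas]
    congr 1; ext p; rw [itg_Phi]
  set G : ℝ × E m → ℝ≥0∞ := fun p => ENNReal.ofReal (g α (1 + ‖p.2‖^2) p.1) with hG
  set ω : ℝ≥0∞ := ENNReal.ofReal (Real.sqrt Real.pi ^ m / Real.Gamma ((m:ℝ)/2 + 1))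
    with hω
  have hωpos : 0 < ω := by
    rw [hω]
    apply ENNReal.ofReal_pos.mpr
    apply div_pos
    · positivity
    · exact Real.Gamma_pos_of_pos (by positivity)
  -- the boxes
  set Q : ℕ → Set (ℝ × E m) := fun k =>
    (Ico ((k:ℝ)+1) ((k:ℝ)+2)) ×ˢ {v : E m | ‖v‖ ∈ Ico ((k:ℝ)+1) ((k:ℝ)+2)} with hQ
  have hQm : ∀ k, MeasurableSet (Q k) := by
    intro k
    exact measurableSet_Ico.prod (measurable_norm measurableSet_Ico)
  have hQd : Pairwise (Function.onFun Disjoint Q) := by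
    intro k l hkl
    rw [Function.onFun, Set.disjoint_left]
    rintro ⟨t, v⟩ hp1 hp2
    have h1 := (Set.mem_prod.mp hp1).1
    have h2 := (Set.mem_prod.mp hp2).1
    simp only [mem_Ico] at h1 h2
    have hk1 : (k:ℝ) < (l:ℝ) + 1 := by linarith [h1.1, h1.2, h2.1, h2.2]
    have hk2 : (l:ℝ) < (k:ℝ) + 1 := by linarith [h1.1, h1.2, h2.1, h2.2]
    have hk1' : k < l + 1 := by exact_mod_cast hk1
    have hk2' : l < k + 1 := by exact_mod_cast hk2
    omega
  -- volume of annulus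
  have hann : ∀ k : ℕ, ENNReal.ofReal (((k:ℝ)+1)^(m-1)) * ω ≤
      volume {v : E m | ‖v‖ ∈ Ico ((k:ℝ)+1) ((k:ℝ)+2)} := by
    intro k
    set K : ℝ := (k:ℝ)+1 with hK_def
    have hK1 : 1 ≤ K := by rw [hK_def]; have : (0:ℝ) ≤ (k:ℝ) := Nat.cast_nonneg k; linarith
    have hKnn : 0 ≤ K := by linarith
    have hset : {v : E m | ‖v‖ ∈ Ico K (K+1)} =
        Metric.ball (0 : E m) (K+1) \ Metric.ball (0 : E m) K := by
      ext v
      simp only [mem_setOf_eq, mem_Ico, mem_diff, Metric.mem_ball, dist_zero_right, not_lt]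
      tauto
    have hKK : (k:ℝ) + 2 = K + 1 := by rw [hK_def]; ring
    rw [hKK, hset, measure_diff (Metric.ball_subset_ball (by linarith)) measurableSet_ball.nullMeasurableSet
      measure_ball_lt_top.ne]
    · rw [EuclideanSpace.volume_ball, EuclideanSpace.volume_ball, Fintype.card_fin]
      apply ENNReal.le_sub_of_add_le_left
        (ENNReal.mul_ne_top (ENNReal.pow_ne_top ENNReal.ofReal_ne_top) ENNReal.ofReal_ne_top)
      rw [← add_mul]
      apply mul_le_mul_left
      rw [← ENNReal.ofReal_pow hKnn, ← ENNReal.ofReal_add (by positivity) (by positivity),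
        ← ENNReal.ofReal_pow (by linarith)]
      apply ENNReal.ofReal_le_ofReal
      subst hm'
      have : K^(m'+1) + K^(m'+1-1) = K^m' * (K+1) := by
        simp only [Nat.add_sub_cancel]
        ring
      rw [this, pow_succ]
      apply mul_le_mul_of_nonneg_right _ (by linarith)
      exact pow_le_pow_left₀ hKnn (by linarith) m'
  -- lower bound on each box integral
  have hbox : ∀ k : ℕ, (ENNReal.ofReal (7 ^ (-|α|)) * ω) * ENNReal.ofReal (((k:ℝ)+1)⁻¹) ≤
      ∫⁻ p in Q k, G p := by
    intro k
    set K : ℝ := (k:ℝ)+1 with hK_def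
    have hK1 : 1 ≤ K := by rw [hK_def]; have : (0:ℝ) ≤ (k:ℝ) := Nat.cast_nonneg k; linarith
    have hconst : ∀ p ∈ Q k, ENNReal.ofReal (7 ^ (-|α|) * K ^ (-α)) ≤ G p := by
      rintro ⟨t, v⟩ hp
      obtain ⟨hpt, hpv⟩ := Set.mem_prod.mp hp
      simp only [mem_Ico] at hpt
      simp only [mem_setOf_eq, mem_Ico] at hpv
      apply ENNReal.ofReal_le_ofReal
      exact g_box_lb hK1 hpt.1 (by linarith [hpt.2]) hpv.1 (by linarith [hpv.2])
    calc (ENNReal.ofReal (7 ^ (-|α|)) * ω) * ENNReal.ofReal (((k:ℝ)+1)⁻¹)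
        ≤ ENNReal.ofReal (7 ^ (-|α|) * K ^ (-α)) * volume (Q k) := by
          -- volume (Q k) ≥ ofReal(K^(m-1)) * ω  and  K⁻¹ ≤ K^(-α) * K^(m-1)
          have hvol : ENNReal.ofReal (K^(m-1)) * ω ≤ volume (Q k) := by
            rw [hQ]
            have : volume ((Ico ((k:ℝ)+1) ((k:ℝ)+2)) ×ˢ
                {v : E m | ‖v‖ ∈ Ico ((k:ℝ)+1) ((k:ℝ)+2)}) =
                volume (Ico ((k:ℝ)+1) ((k:ℝ)+2)) *
                volume {v : E m | ‖v‖ ∈ Ico ((k:ℝ)+1) ((k:ℝ)+2)} := by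
              rw [Measure.volume_eq_prod, Measure.prod_prod]
            rw [this, Real.volume_Ico, show ((k:ℝ)+2) - ((k:ℝ)+1) = 1 by ring,
              ENNReal.ofReal_one, one_mul]
            exact hann k
          have hre : K⁻¹ ≤ K ^ (-α) * K^(m-1) := by
            have hcast : ((m-1 : ℕ) : ℝ) = (m:ℝ) - 1 := by
              rw [Nat.cast_sub (by omega)]; norm_num
            rw [← Real.rpow_natCast K (m-1), ← Real.rpow_add (by linarith),
              ← Real.rpow_neg_one K, hcast]
            exact Real.rpow_le_rpow_of_exponent_le hK1 (by linarith)
          calc (ENNReal.ofReal (7 ^ (-|α|)) * ω) * ENNReal.ofReal (((k:ℝ)+1)⁻¹)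
              = ENNReal.ofReal (7 ^ (-|α|)) * ENNReal.ofReal (K⁻¹) * ω := by
                rw [← hK_def]; ring
            _ ≤ ENNReal.ofReal (7 ^ (-|α|)) * ENNReal.ofReal (K ^ (-α) * K^(m-1)) * ω := by
                apply mul_le_mul_left
                exact mul_le_mul_right (ENNReal.ofReal_le_ofReal hre) _
            _ = ENNReal.ofReal (7 ^ (-|α|) * K ^ (-α)) * (ENNReal.ofReal (K^(m-1)) * ω) := by
                rw [ENNReal.ofReal_mul (by positivity), ENNReal.ofReal_mul (by positivity)]
                ring
            _ ≤ ENNReal.ofReal (7 ^ (-|α|) * K ^ (-α)) * volume (Q k) :=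
                mul_le_mul_right hvol _
      _ = ∫⁻ _ in Q k, ENNReal.ofReal (7 ^ (-|α|) * K ^ (-α)) := (setLIntegral_const _ _).symm
      _ ≤ ∫⁻ p in Q k, G p := setLIntegral_mono (g_meas α) hconst
  -- conclude
  rw [htrans, eq_top_iff]
  calc (⊤ : ℝ≥0∞) = (ENNReal.ofReal (7 ^ (-|α|)) * ω) *
        ∑' k : ℕ, ENNReal.ofReal (((k:ℝ)+1)⁻¹) := by
        rw [tsum_inv_top, ENNReal.mul_top]
        intro h0
        rcases mul_eq_zero.mp h0 with h | h
        · exact (ENNReal.ofReal_pos.mpr (by positivity)).ne' h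
        · exact hωpos.ne' h
    _ = ∑' k : ℕ, (ENNReal.ofReal (7 ^ (-|α|)) * ω) * ENNReal.ofReal (((k:ℝ)+1)⁻¹) :=
        (ENNReal.tsum_mul_left).symm
    _ ≤ ∑' k : ℕ, ∫⁻ p in Q k, G p := ENNReal.tsum_le_tsum hbox
    _ = ∫⁻ p in ⋃ k, Q k, G p := (lintegral_iUnion hQm hQd G).symm
    _ ≤ ∫⁻ p, G p := setLIntegral_le_lintegral _ _

end LorAux

/-- Lemma: integrability of `|Δ(x+iy)|^{−α}` over `ℝⁿ`. -/
theorem lorentz_integral_Rn (n : ℕ) [NeZero n] (hn : 3 ≤ n) (α : ℝ) :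
    (∀ y ∈ cone n, ∀ x : Fin n → ℝ,
        lorC (fun i => (x i : ℂ) + (y i : ℂ) * Complex.I) ≠ 0) ∧
    (∀ y ∈ cone n,
      (Integrable (fun x : Fin n → ℝ =>
          ‖lorC (fun i => (x i : ℂ) + (y i : ℂ) * Complex.I)‖ ^ (-α)) volume ↔
        (n : ℝ) - 1 < α)) ∧
    ((n : ℝ) - 1 < α → ∃ C : ℝ, ∀ y ∈ cone n,
      (∫ x : Fin n → ℝ,
          ‖lorC (fun i => (x i : ℂ) + (y i : ℂ) * Complex.I)‖ ^ (-α) ∂volume)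
        = C * lor y ^ (-α + (n : ℝ) / 2)) := by
  obtain ⟨m, rfl⟩ : ∃ m, n = m + 1 := ⟨n - 1, by omega⟩
  have hm2 : 2 ≤ m := by omega
  have hcast : ((m + 1 : ℕ) : ℝ) - 1 = (m : ℝ) := by push_cast; ring
  refine ⟨fun y hy x => LorAux.lorC_ne_zero hy x, fun y hy => ?_, fun hα => ?_⟩
  · -- integrability criterion
    have hIff : Integrable (LorAux.itg α y) volume ↔ LorAux.Lint α y < ⊤ := by
      constructor
      · intro h
        exact (hasFiniteIntegral_iff_ofReal
          (Filter.Eventually.of_forall (LorAux.itg_nonneg α y))).mp h.2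
      · intro h
        exact ⟨(LorAux.itg_cont hy α).aestronglyMeasurable,
          (hasFiniteIntegral_iff_ofReal
            (Filter.Eventually.of_forall (LorAux.itg_nonneg α y))).mpr h⟩
    have hconst_pos : 0 < ENNReal.ofReal ((lor y) ^ (((m:ℝ)+1)/2 - α)) :=
      ENNReal.ofReal_pos.mpr (Real.rpow_pos_of_pos hy.1 _)
    have hLiff : LorAux.Lint α y < ⊤ ↔ LorAux.Lint α (LorAux.e0 (m := m)) < ⊤ := by
      rw [LorAux.Lint_eq hy α]
      rw [ENNReal.mul_lt_top_iff]
      constructor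
      · rintro (⟨-, h⟩ | h | h)
        · exact h
        · exact absurd h hconst_pos.ne'
        · simp [h]
      · intro h
        exact Or.inl ⟨ENNReal.ofReal_lt_top, h⟩
    have he0iff : LorAux.Lint α (LorAux.e0 (m := m)) < ⊤ ↔ (m : ℝ) < α := by
      constructor
      · intro h
        by_contra hcon
        rw [LorAux.Lint_e0_top hm2 (not_lt.mp hcon)] at h
        exact (lt_irrefl _) h
      · exact LorAux.Lint_e0_lt_top hm2
    show Integrable (LorAux.itg α y) volume ↔ _
    rw [hIff, hLiff, he0iff, hcast]
  · -- the exact value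
    refine ⟨(LorAux.Lint α (LorAux.e0 (m := m))).toReal, fun y hy => ?_⟩
    have hval : (∫ x, LorAux.itg α y x ∂volume) = (LorAux.Lint α y).toReal := by
      rw [integral_eq_lintegral_of_nonneg_ae
        (Filter.Eventually.of_forall (LorAux.itg_nonneg α y))
        (LorAux.itg_cont hy α).aestronglyMeasurable]
      rfl
    show (∫ x, LorAux.itg α y x ∂volume) = _
    rw [hval, LorAux.Lint_eq hy α, ENNReal.toReal_mul,
      ENNReal.toReal_ofReal (Real.rpow_nonneg hy.1.le _)]
    rw [show (-α + ((m + 1 : ℕ) : ℝ) / 2) = ((m:ℝ)+1)/2 - α by push_cast; ring]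
    ring
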